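/- Let k, ℓ be natural numbers with ℓ ≤ k, and let S : Fin ℓ → Matrix (Fin (2^k)) (Fin (2^k)) ℂ be matrices such that (i) (S i)^2 = 1 for every i, (ii) S i * S j = S j * S i for all i, j, and (iii) for every nonempty subset T of Fin ℓ, the trace of ∏_{i ∈ T} S i equals 0. Then the complex dimension (Module.finrank) of the joint fixed subspace {v : Fin (2^k) → ℂ | ∀ i, (S i).mulVec v = v} equals 2^(k − ℓ). -/

import Mathlib

open Finset Matrix LinearMap

/-- Abstract stabilizer dimension count: if `S : Fin ℓ → Matrix (Fin (2^k)) (Fin (2^k)) ℂ`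
are pairwise commuting involutions such that every nonempty product of distinct `S i` has
trace zero, then the joint fixed subspace `{v | ∀ i, (S i).mulVec v = v}` has complex
dimension `2^(k - ℓ)`. -/
theorem stabilizer_code_space_dim (k ℓ : ℕ) (hℓ : ℓ ≤ k)
    (S : Fin ℓ → Matrix (Fin (2 ^ k)) (Fin (2 ^ k)) ℂ)
    (hsq : ∀ i, S i * S i = 1)
    (hcomm : ∀ i j, S i * S j = S j * S i)
    (htr : ∀ T : Finset (Fin ℓ), T.Nonempty →
      Matrix.trace (T.noncommProd S (fun i _ j _ _ => hcomm i j)) = 0) :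
    Module.finrank ℂ
      ↥(⨅ i, LinearMap.ker ((Matrix.mulVecLin (S i)) - LinearMap.id)) = 2 ^ (k - ℓ) := by
  classical
  set p : Submodule ℂ (Fin (2^k) → ℂ) :=
    ⨅ i, LinearMap.ker ((Matrix.mulVecLin (S i)) - LinearMap.id) with hp
  have hgc : ∀ i j : Fin ℓ, Commute (1 + S i) (1 + S j) := fun i j =>
    Commute.add_right (Commute.one_right _)
      (Commute.add_left (Commute.one_left _) (hcomm i j))
  -- expansion of the product ∏ (1 + S i)
  have key : ∀ U : Finset (Fin ℓ),
      U.noncommProd (fun i => 1 + S i) (fun i _ j _ _ => hgc i j)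
        = ∑ T ∈ U.powerset, T.noncommProd S (fun i _ j _ _ => hcomm i j) := by
    intro U
    induction U using Finset.induction_on with
    | empty => simp; rfl
    | @insert a U ha ih =>
      erw [Finset.noncommProd_insert_of_notMem _ _ _ _ ha, ih,
        Finset.sum_powerset_insert ha, add_mul, one_mul, Finset.mul_sum]
      congr 1
      refine Finset.sum_congr rfl fun T hT => ?_
      erw [Finset.noncommProd_insert_of_notMem _ _ _ _
        (fun haT => ha (Finset.mem_powerset.mp hT haT))]
  set Q : Matrix (Fin (2^k)) (Fin (2^k)) ℂ :=
    Finset.univ.noncommProd (fun i => 1 + S i) (fun i _ j _ _ => hgc i j) with hQ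
  -- trace of Q
  have htrQ : Matrix.trace Q = (2:ℂ)^k := by
    rw [hQ, key, Matrix.trace_sum]
    rw [Finset.sum_eq_single (∅ : Finset (Fin ℓ))]
    · show Matrix.trace (1 : Matrix (Fin (2^k)) (Fin (2^k)) ℂ) = _
      simp [Matrix.trace_one]
    · intro T _ hT
      exact htr T (Finset.nonempty_iff_ne_empty.mpr hT)
    · simp
  -- S i absorbs into Q
  have hSQ : ∀ i, S i * Q = Q := by
    intro i
    rw [hQ, ← Finset.mul_noncommProd_erase Finset.univ (Finset.mem_univ i)
      (fun j => 1 + S j) (fun i _ j _ _ => hgc i j), ← mul_assoc]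
    congr 1
    rw [mul_add, mul_one, hsq i, add_comm]
  -- Q acts as 2^card on fixed vectors
  have hQfix : ∀ (U : Finset (Fin ℓ)) (v : Fin (2^k) → ℂ), (∀ i, (S i).mulVec v = v) →
      (U.noncommProd (fun i => 1 + S i) (fun i _ j _ _ => hgc i j)).mulVec v
        = ((2:ℂ)^U.card) • v := by
    intro U v hv
    induction U using Finset.induction_on with
    | empty => simp [Matrix.one_mulVec]; exact Matrix.one_mulVec v
    | @insert a U ha ih =>
      erw [Finset.noncommProd_insert_of_notMem _ _ _ _ ha, ← Matrix.mulVec_mulVec, ih,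
        Matrix.mulVec_smul, Matrix.add_mulVec, Matrix.one_mulVec, hv a,
        Finset.card_insert_of_notMem ha]
      rw [pow_succ]
      module
  set P : Matrix (Fin (2^k)) (Fin (2^k)) ℂ := ((2:ℂ)^ℓ)⁻¹ • Q with hP
  have h2 : ((2:ℂ)^ℓ) ≠ 0 := pow_ne_zero _ two_ne_zero
  have hmem : ∀ v : Fin (2^k) → ℂ, v ∈ p ↔ ∀ i, (S i).mulVec v = v := by
    intro v
    simp [hp, Submodule.mem_iInf, LinearMap.mem_ker, LinearMap.sub_apply,
      Matrix.mulVecLin_apply, sub_eq_zero]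
  have hproj : LinearMap.IsProj p (Matrix.mulVecLin P) := by
    constructor
    · intro v
      rw [hmem]
      intro i
      rw [Matrix.mulVecLin_apply, Matrix.mulVec_mulVec, hP, Matrix.mul_smul, hSQ i]
    · intro v hv
      rw [hmem] at hv
      rw [Matrix.mulVecLin_apply, hP, Matrix.smul_mulVec, hQ, hQfix _ v hv]
      simp [smul_smul, inv_mul_cancel₀ h2, Finset.card_univ]
  have htrace : LinearMap.trace ℂ _ (Matrix.mulVecLin P) = Matrix.trace P := by
    rw [LinearMap.trace_eq_matrix_trace ℂ (Pi.basisFun ℂ (Fin (2^k))),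
      LinearMap.toMatrix_eq_toMatrix', ← Matrix.toLin'_apply' P, LinearMap.toMatrix'_toLin']
  have htrP : Matrix.trace P = (2:ℂ)^(k-ℓ) := by
    rw [hP, Matrix.trace_smul, htrQ, smul_eq_mul, inv_mul_eq_iff_eq_mul₀ h2, ← pow_add]
    congr 1
    omega
  have hfin : (Module.finrank ℂ p : ℂ) = (2:ℂ)^(k-ℓ) := by
    rw [← hproj.trace, htrace, htrP]
  have : (Module.finrank ℂ p : ℂ) = ((2^(k-ℓ) : ℕ) : ℂ) := by push_cast; exact hfin
  exact_mod_cast this
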